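/- Let G be a graph whose vertex set is partitioned into clusters C_1,…,C_k, and let D be the set of vertices that have a neighbor in a different cluster. Suppose |D| ≤ ε·|V(G)|. If for each i, I_i is a maximum independent set of G[C_i], then removing from I = ⋃I_i all vertices of D that have a neighbor in I yields an independent set of G of size at least α(G) − ε·|V(G)|, where α(G) is the maximum size of an independent set of G. -/
import Mathlib


/-- `S` is an independent set of `G`. -/
def SimpleGraph.IsIndep {V : Type*} (G : SimpleGraph V) (S : Set V) : Prop :=
  ∀ u ∈ S, ∀ v ∈ S, ¬ G.Adj u v

lemma ncard_iUnion_fin {V : Type*} [Fintype V] {k : ℕ} (s : Fin k → Set V)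
    (h : ∀ i j, i ≠ j → Disjoint (s i) (s j)) :
    (⋃ i, s i).ncard = ∑ i, (s i).ncard := by
  classical
  have he : (⋃ i, s i).toFinset = Finset.univ.biUnion (fun i => (s i).toFinset) := by
    ext v; simp
  rw [Set.ncard_eq_toFinset_card', he, Finset.card_biUnion]
  · simp [Set.ncard_eq_toFinset_card']
  · intro i _ j _ hij
    simpa [Finset.disjoint_left, Set.disjoint_left] using
      (Set.disjoint_toFinset).mpr (h i j hij)

/-- Vertex set partitioned into clusters via the cluster map `c`; `D` is the set of vertices
with a neighbor in a different cluster and `|D| ≤ ε·|V|`. If `I i` is a maximum independent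
set of the subgraph induced by cluster `i`, then removing from `I = ⋃ I i` all vertices of `D`
having a neighbor in `I` yields an independent set of `G` of size at least `α(G) - ε·|V|`. -/
theorem cluster_approximation {V : Type*} [Fintype V] {k : ℕ} (G : SimpleGraph V)
    (c : V → Fin k) (ε : ℝ) (hε : 0 < ε)
    (hD : (({v | ∃ u, G.Adj v u ∧ c u ≠ c v}).ncard : ℝ) ≤ ε * Fintype.card V)
    (I : Fin k → Set V)
    (hsub : ∀ i, I i ⊆ {v | c v = i})
    (hind : ∀ i, G.IsIndep (I i))
    (hmax : ∀ i, ∀ J : Set V, J ⊆ {v | c v = i} → G.IsIndep J → J.ncard ≤ (I i).ncard) :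
    G.IsIndep ((⋃ i, I i) \ {v | (∃ u, G.Adj v u ∧ c u ≠ c v) ∧ ∃ u ∈ ⋃ i, I i, G.Adj v u}) ∧
    ∀ J : Set V, G.IsIndep J →
      (J.ncard : ℝ) - ε * Fintype.card V ≤
        (((⋃ i, I i) \
          {v | (∃ u, G.Adj v u ∧ c u ≠ c v) ∧ ∃ u ∈ ⋃ i, I i, G.Adj v u}).ncard : ℝ) := by
  classical
  set U : Set V := ⋃ i, I i with hU
  set D : Set V := {v | ∃ u, G.Adj v u ∧ c u ≠ c v} with hDdef
  set B : Set V := {v | (∃ u, G.Adj v u ∧ c u ≠ c v) ∧ ∃ u ∈ U, G.Adj v u} with hBdef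
  constructor
  · intro u hu v hv hadj
    obtain ⟨huU, huB⟩ := hu
    obtain ⟨hvU, hvB⟩ := hv
    by_cases hc : c u = c v
    · obtain ⟨_, ⟨i, rfl⟩, hui⟩ := huU
      obtain ⟨_, ⟨j, rfl⟩, hvj⟩ := hvU
      have hi : c u = i := hsub i hui
      have hj : c v = j := hsub j hvj
      have : i = j := by rw [← hi, ← hj, hc]
      subst this
      exact hind i u hui v hvj hadj
    · exact huB ⟨⟨v, hadj, fun h => hc h.symm⟩, ⟨v, hvU, hadj⟩⟩
  · intro J hJ
    have hJcard : J.ncard ≤ U.ncard := by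
      have hJeq : J = ⋃ i, (J ∩ {v | c v = i}) := by
        ext v; simp only [Set.mem_iUnion, Set.mem_inter_iff, Set.mem_setOf_eq]
        exact ⟨fun h => ⟨c v, h, rfl⟩, fun ⟨i, h, _⟩ => h⟩
      have h1 : J.ncard = ∑ i, (J ∩ {v | c v = i}).ncard := by
        conv_lhs => rw [hJeq]
        rw [ncard_iUnion_fin]
        intro i j hij
        rw [Set.disjoint_left]
        rintro v ⟨_, hvi⟩ ⟨_, hvj⟩
        exact hij (hvi.symm.trans hvj)
      have h2 : U.ncard = ∑ i, (I i).ncard := by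
        rw [hU, ncard_iUnion_fin]
        intro i j hij
        rw [Set.disjoint_left]
        intro v hvi hvj
        exact hij ((hsub i hvi).symm.trans (hsub j hvj))
      rw [h1, h2]
      refine Finset.sum_le_sum fun i _ => ?_
      exact hmax i _ Set.inter_subset_right
        (fun a ha b hb => hJ a ha.1 b hb.1)
    have hBD : B.ncard ≤ D.ncard :=
      Set.ncard_le_ncard (fun v hv => hv.1) (Set.toFinite D)
    have hUS : U.ncard ≤ (U \ B).ncard + B.ncard := by
      refine le_trans (Set.ncard_le_ncard ?_ (Set.toFinite _)) (Set.ncard_union_le _ _)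
      intro v hv
      by_cases h : v ∈ B
      · exact Or.inr h
      · exact Or.inl ⟨hv, h⟩
    have c1 : (J.ncard : ℝ) ≤ U.ncard := Nat.cast_le.mpr hJcard
    have c2 : (B.ncard : ℝ) ≤ D.ncard := Nat.cast_le.mpr hBD
    have c3 : (U.ncard : ℝ) ≤ (U \ B).ncard + B.ncard := by exact_mod_cast hUS
    linarith
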